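/- Let (α_k)_{k≥1} be a sequence of nonnegative real numbers, r > 0, and (b_k)_{k≥1} a nondecreasing unbounded sequence of positive real numbers. Assume Σ_{k=1}^∞ α_k b_k^{−r} < ∞ and that there exists c > 0 such that for every n ≥ 1 and every ε > 0, P( max_{1≤k≤n} |S_k| ≥ ε ) ≤ c ε^{−r} Σ_{k=1}^n α_k. Then S_n/b_n → 0 almost surely as n → ∞. -/

import Mathlib

open MeasureTheory Filter
open scoped ENNReal

/-- **Tómács–Libor lemma** (Theorem 2.4 of Tómács–Libor): if `(α_k)_{k≥1}` are
nonnegative reals, `r > 0`, `(b_k)_{k≥1}` is a nondecreasing unbounded sequence of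
positive reals, `Σ_{k=1}^∞ α_k b_k^{-r} < ∞`, and there is `c > 0` such that for all
`n ≥ 1` and `ε > 0`, `P(max_{1≤k≤n} |S_k| ≥ ε) ≤ c ε^{-r} Σ_{k=1}^n α_k`, then
`S_n / b_n → 0` almost surely. Here `S k = Σ_{i=1}^k X_i` and the event
`max_{1≤k≤n} |S_k| ≥ ε` is expressed as the existence of some `1 ≤ k ≤ n` with
`|S_k| ≥ ε`; `x ^ r` denotes the real power `Real.rpow`. -/
theorem tomacs_libor_slln
    {Ω : Type*} [MeasurableSpace Ω] (μ : Measure Ω) [IsProbabilityMeasure μ]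
    (X S : ℕ → Ω → ℝ)
    (hXmeas : ∀ i, 1 ≤ i → Measurable (X i))
    (hS : ∀ k ω, S k ω = ∑ i ∈ Finset.Icc 1 k, X i ω)
    (α : ℕ → ℝ) (hα_nonneg : ∀ k, 1 ≤ k → 0 ≤ α k)
    (r : ℝ) (hr : 0 < r)
    (b : ℕ → ℝ)
    (hb_pos : ∀ k, 1 ≤ k → 0 < b k)
    (hb_mono : ∀ k, 1 ≤ k → b k ≤ b (k + 1))
    (hb_top : Tendsto b atTop atTop)
    (h_sum : Summable (fun k : ℕ => α (k + 1) * b (k + 1) ^ (-r)))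
    (h_max : ∃ c : ℝ, 0 < c ∧ ∀ n : ℕ, 1 ≤ n → ∀ ε : ℝ, 0 < ε →
      (μ {ω | ∃ k, 1 ≤ k ∧ k ≤ n ∧ ε ≤ |S k ω|}).toReal
        ≤ c * ε ^ (-r) * ∑ k ∈ Finset.Icc 1 n, α k) :
    ∀ᵐ ω ∂μ, Tendsto (fun n => S n ω / b n) atTop (nhds 0) := by
  classical
  obtain ⟨c, hc, hmax⟩ := h_max
  -- monotonicity of b on [1, ∞)
  have hb_mono' : ∀ i n : ℕ, 1 ≤ i → i ≤ n → b i ≤ b n := by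
    intro i n h1 hin
    induction n with
    | zero => omega
    | succ n ih =>
      rcases Nat.lt_or_ge i (n + 1) with h | h
      · exact le_trans (ih (by omega)) (hb_mono n (by omega))
      · have : i = n + 1 := by omega
        simp [this]
  -- the subsequence m j = first index n ≥ 1 with b n > 2^j
  have hm_ex : ∀ j : ℕ, ∃ n, 1 ≤ n ∧ (2:ℝ) ^ j < b n := by
    intro j
    obtain ⟨n, h1, h2⟩ :=
      ((hb_top.eventually (eventually_gt_atTop ((2:ℝ) ^ j))).and (eventually_ge_atTop 1)).exists
    exact ⟨n, h2, h1⟩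
  set m : ℕ → ℕ := fun j => Nat.find (hm_ex j) with hm_def
  have hm1 : ∀ j, 1 ≤ m j := fun j => (Nat.find_spec (hm_ex j)).1
  have hm2 : ∀ j, (2:ℝ) ^ j < b (m j) := fun j => (Nat.find_spec (hm_ex j)).2
  have hm_min : ∀ j n, 1 ≤ n → (2:ℝ) ^ j < b n → m j ≤ n := fun j n h1 h2 =>
    Nat.find_min' _ ⟨h1, h2⟩
  have hm_lt : ∀ j n, 1 ≤ n → n < m j → b n ≤ (2:ℝ) ^ j := by
    intro j n h1 hn
    have := Nat.find_min (hm_ex j) hn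
    push_neg at this
    exact this h1
  have hm_mono : Monotone m := by
    intro i j hij
    exact hm_min i (m j) (hm1 j)
      (lt_of_le_of_lt (pow_le_pow_right₀ one_le_two hij) (hm2 j))
  have hm_top : Tendsto m atTop atTop := by
    rw [tendsto_atTop]
    intro N
    have h2top : Tendsto (fun j : ℕ => (2:ℝ) ^ j) atTop atTop :=
      tendsto_pow_atTop_atTop_of_one_lt one_lt_two
    filter_upwards [h2top.eventually (eventually_ge_atTop (b N))] with j hj
    by_contra hlt
    push_neg at hlt
    have hmjN : m j ≤ N := by omega
    have := hb_mono' (m j) N (hm1 j) hmjN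
    have := hm2 j
    linarith
  -- main Borel–Cantelli estimate
  have key : ∀ ε : ℝ, 0 < ε →
      (∑' j : ℕ, μ {ω | ∃ k, 1 ≤ k ∧ k ≤ m (j+1) - 1 ∧ ε * 2 ^ j ≤ |S k ω|}) ≠ ⊤ := by
    intro ε hε
    set d : ℝ := (2:ℝ) ^ (-r) with hd
    have hd_pos : 0 < d := Real.rpow_pos_of_pos two_pos _
    have hd_lt : d < 1 := Real.rpow_lt_one_of_one_lt_of_neg one_lt_two (neg_lt_zero.2 hr)
    set C : ℝ≥0∞ := (1 - ENNReal.ofReal d)⁻¹ with hC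
    have hC_ne : C ≠ ⊤ := by
      rw [hC, Ne, ENNReal.inv_eq_top, tsub_eq_zero_iff_le]
      exact (ENNReal.ofReal_lt_one.2 hd_lt : ENNReal.ofReal d < 1).not_ge
    have hpow : ∀ nn : ℕ, ((2:ℝ) ^ nn) ^ (-r) = d ^ nn := by
      intro nn
      have h1 : ((2:ℝ) ^ nn) ^ (-r) = (2:ℝ) ^ ((nn : ℝ) * (-r)) := by
        rw [← Real.rpow_natCast 2 nn, ← Real.rpow_mul (by norm_num)]
      rw [h1, hd, ← Real.rpow_natCast ((2:ℝ) ^ (-r)) nn, ← Real.rpow_mul (by norm_num),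
        mul_comm]
    set g : ℕ → ℕ → ℝ≥0∞ := fun j k =>
      if 1 ≤ k ∧ k ≤ m (j+1) - 1 then
        ENNReal.ofReal (((2:ℝ) ^ j) ^ (-r)) * ENNReal.ofReal (α k)
      else 0 with hg
    have hstep : ∀ j : ℕ, μ {ω | ∃ k, 1 ≤ k ∧ k ≤ m (j+1) - 1 ∧ ε * 2 ^ j ≤ |S k ω|}
        ≤ ENNReal.ofReal (c * ε ^ (-r)) * ∑' k, g j k := by
      intro j
      rcases Nat.eq_zero_or_pos (m (j+1) - 1) with h0 | hpos
      · have hempty : {ω | ∃ k, 1 ≤ k ∧ k ≤ m (j+1) - 1 ∧ ε * 2 ^ j ≤ |S k ω|} = ∅ := by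
          ext ω
          simp only [Set.mem_setOf_eq, Set.mem_empty_iff_false, iff_false]
          rintro ⟨k, hk1, hk2, -⟩
          omega
        rw [hempty, measure_empty]
        exact zero_le
      · have hA : (0:ℝ) ≤ ∑ k ∈ Finset.Icc 1 (m (j+1) - 1), α k :=
          Finset.sum_nonneg fun k hk => hα_nonneg k (Finset.mem_Icc.1 hk).1
        have hb2 := hmax (m (j+1) - 1) hpos (ε * 2 ^ j) (by positivity)
        have htsum : (∑' k, g j k) = ENNReal.ofReal (((2:ℝ) ^ j) ^ (-r))
            * ENNReal.ofReal (∑ k ∈ Finset.Icc 1 (m (j+1) - 1), α k) := by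
          rw [tsum_eq_sum (s := Finset.Icc 1 (m (j+1) - 1))
            (fun k hk => by rw [hg]; simp only; rw [if_neg (by simpa [Finset.mem_Icc] using hk)]),
            ENNReal.ofReal_sum_of_nonneg (fun k hk => hα_nonneg k (Finset.mem_Icc.1 hk).1),
            Finset.mul_sum]
          refine Finset.sum_congr rfl fun k hk => ?_
          rw [hg]
          simp only
          rw [if_pos (Finset.mem_Icc.1 hk)]
        calc μ {ω | ∃ k, 1 ≤ k ∧ k ≤ m (j+1) - 1 ∧ ε * 2 ^ j ≤ |S k ω|}
            = ENNReal.ofReal ((μ {ω | ∃ k, 1 ≤ k ∧ k ≤ m (j+1) - 1 ∧ ε * 2 ^ j ≤ |S k ω|}).toReal) :=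
              (ENNReal.ofReal_toReal (measure_ne_top μ _)).symm
          _ ≤ ENNReal.ofReal (c * (ε * 2 ^ j) ^ (-r) * ∑ k ∈ Finset.Icc 1 (m (j+1) - 1), α k) :=
              ENNReal.ofReal_le_ofReal hb2
          _ = ENNReal.ofReal ((c * ε ^ (-r)) * (((2:ℝ) ^ j) ^ (-r)
                * ∑ k ∈ Finset.Icc 1 (m (j+1) - 1), α k)) := by
              rw [Real.mul_rpow hε.le (by positivity)]
              ring_nf
          _ = ENNReal.ofReal (c * ε ^ (-r)) * ∑' k, g j k := by
              rw [htsum, ← ENNReal.ofReal_mul (by positivity : (0:ℝ) ≤ ((2:ℝ) ^ j) ^ (-r)),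
                ← ENNReal.ofReal_mul (by positivity : (0:ℝ) ≤ c * ε ^ (-r))]
    have hk_bound : ∀ k : ℕ, (∑' j, g j k) ≤
        (if 1 ≤ k then ENNReal.ofReal (α k * (b k / 2) ^ (-r)) else 0) * C := by
      intro k
      rcases Nat.eq_zero_or_pos k with rfl | hk1
      · have : ∀ j : ℕ, g j 0 = 0 := fun j => by rw [hg]; simp
        simp [this]
      · rw [if_pos (show 1 ≤ k from hk1)]
        have ht_ex : ∃ t : ℕ, b k ≤ (2:ℝ) ^ (t + 1) := by
          obtain ⟨t, ht⟩ := pow_unbounded_of_one_lt (b k) (y := (2:ℝ)) one_lt_two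
          exact ⟨t, le_of_lt (lt_of_lt_of_le ht (pow_le_pow_right₀ one_le_two (Nat.le_succ t)))⟩
        set t := Nat.find ht_ex with ht_def
        have ht : b k ≤ (2:ℝ) ^ (t + 1) := Nat.find_spec ht_ex
        have hcond : ∀ j, k ≤ m (j+1) - 1 → t ≤ j := by
          intro j hj
          have hkm : k < m (j+1) := by have := hm1 (j+1); omega
          exact Nat.find_min' ht_ex (hm_lt (j+1) k hk1 hkm)
        have h1 : (∑' j, g j k) ≤ ∑' j : ℕ,
            ENNReal.ofReal (α k) * (if t ≤ j then ENNReal.ofReal (((2:ℝ) ^ j) ^ (-r)) else 0) := by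
          refine ENNReal.tsum_le_tsum fun j => ?_
          rw [hg]
          simp only
          by_cases hj : 1 ≤ k ∧ k ≤ m (j+1) - 1
          · rw [if_pos hj, if_pos (hcond j hj.2), mul_comm]
          · rw [if_neg hj]
            exact zero_le
        have h2 : (∑' j : ℕ, (if t ≤ j then ENNReal.ofReal (((2:ℝ) ^ j) ^ (-r)) else 0))
            = ∑' i : ℕ, ENNReal.ofReal (((2:ℝ) ^ (t + i)) ^ (-r)) := by
          rw [← Function.Injective.tsum_eq (g := fun i : ℕ => t + i)
            (add_right_injective t)
            (fun j hj => by
              by_contra hcon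
              apply hj
              simp only [Function.mem_support, ne_eq, not_not] at *
              rw [if_neg]
              intro hle
              exact hcon ⟨j - t, show t + (j - t) = j by omega⟩)]
          exact tsum_congr fun i => by rw [if_pos (Nat.le_add_right t i)]
        have h4 : (∑' i : ℕ, ENNReal.ofReal (((2:ℝ) ^ (t + i)) ^ (-r)))
            = ENNReal.ofReal (((2:ℝ) ^ t) ^ (-r)) * C := by
          have heach : ∀ i : ℕ, ENNReal.ofReal (((2:ℝ) ^ (t + i)) ^ (-r))
              = ENNReal.ofReal (((2:ℝ) ^ t) ^ (-r)) * (ENNReal.ofReal d) ^ i := by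
            intro i
            rw [hpow (t + i), pow_add, ENNReal.ofReal_mul (by positivity),
              ← hpow t, ENNReal.ofReal_pow hd_pos.le]
          rw [tsum_congr heach, ENNReal.tsum_mul_left, ENNReal.tsum_geometric]
        have hbt : b k / 2 ≤ (2:ℝ) ^ t := by
          rw [div_le_iff₀ (by norm_num : (0:ℝ) < 2)]
          calc b k ≤ 2 ^ (t + 1) := ht
            _ = 2 ^ t * 2 := by ring
        have hbk2 : (0:ℝ) < b k / 2 := by have := hb_pos k hk1; linarith
        have h5 : ((2:ℝ) ^ t) ^ (-r) ≤ (b k / 2) ^ (-r) :=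
          Real.rpow_le_rpow_of_nonpos hbk2 hbt (neg_nonpos.2 hr.le)
        calc (∑' j, g j k) ≤ ∑' j : ℕ,
              ENNReal.ofReal (α k) * (if t ≤ j then ENNReal.ofReal (((2:ℝ) ^ j) ^ (-r)) else 0) := h1
          _ = ENNReal.ofReal (α k) * (ENNReal.ofReal (((2:ℝ) ^ t) ^ (-r)) * C) := by
              rw [ENNReal.tsum_mul_left, h2, h4]
          _ ≤ ENNReal.ofReal (α k) * (ENNReal.ofReal ((b k / 2) ^ (-r)) * C) := by
              gcongr
          _ = ENNReal.ofReal (α k * (b k / 2) ^ (-r)) * C := by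
              rw [ENNReal.ofReal_mul (hα_nonneg k hk1), mul_assoc]
    have hsum2 : Summable (fun k : ℕ => α (k+1) * (b (k+1) / 2) ^ (-r)) := by
      refine (h_sum.mul_left ((2:ℝ) ^ r)).congr fun k => ?_
      rw [Real.div_rpow (hb_pos (k+1) (Nat.le_add_left 1 k)).le (by norm_num : (0:ℝ) ≤ 2),
        div_eq_mul_inv, Real.rpow_neg (by norm_num : (0:ℝ) ≤ 2) r, inv_inv]
      ring
    have hfin : (∑' k : ℕ, (if 1 ≤ k then ENNReal.ofReal (α k * (b k / 2) ^ (-r)) else 0)) ≠ ⊤ := by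
      have heq : (∑' k : ℕ, (if 1 ≤ k then ENNReal.ofReal (α k * (b k / 2) ^ (-r)) else 0))
          = 0 + ∑' k : ℕ, ENNReal.ofReal (α (k+1) * (b (k+1) / 2) ^ (-r)) := by
        rw [tsum_eq_zero_add' ENNReal.summable]
        have h0 : (if 1 ≤ (0:ℕ) then ENNReal.ofReal (α 0 * (b 0 / 2) ^ (-r)) else 0) = 0 := by
          simp
        rw [h0]
        congr 1
      rw [heq, zero_add, ← ENNReal.ofReal_tsum_of_nonneg (fun k => mul_nonneg
        (hα_nonneg (k+1) (Nat.le_add_left 1 k))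
        (Real.rpow_nonneg (by have := hb_pos (k+1) (Nat.le_add_left 1 k); positivity) _)) hsum2]
      exact ENNReal.ofReal_ne_top
    have hfinal : (∑' j : ℕ, μ {ω | ∃ k, 1 ≤ k ∧ k ≤ m (j+1) - 1 ∧ ε * 2 ^ j ≤ |S k ω|})
        ≤ ENNReal.ofReal (c * ε ^ (-r)) *
          ((∑' k : ℕ, (if 1 ≤ k then ENNReal.ofReal (α k * (b k / 2) ^ (-r)) else 0)) * C) := by
      calc (∑' j : ℕ, μ {ω | ∃ k, 1 ≤ k ∧ k ≤ m (j+1) - 1 ∧ ε * 2 ^ j ≤ |S k ω|})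
          ≤ ∑' j : ℕ, ENNReal.ofReal (c * ε ^ (-r)) * ∑' k, g j k := ENNReal.tsum_le_tsum hstep
        _ = ENNReal.ofReal (c * ε ^ (-r)) * ∑' j : ℕ, ∑' k, g j k := ENNReal.tsum_mul_left
        _ = ENNReal.ofReal (c * ε ^ (-r)) * ∑' k : ℕ, ∑' j, g j k := by rw [ENNReal.tsum_comm]
        _ ≤ _ := by
            gcongr
            calc (∑' k : ℕ, ∑' j, g j k)
                ≤ ∑' k : ℕ, (if 1 ≤ k then ENNReal.ofReal (α k * (b k / 2) ^ (-r)) else 0) * C :=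
                  ENNReal.tsum_le_tsum hk_bound
              _ = _ := ENNReal.tsum_mul_right
    exact ne_top_of_le_ne_top
      (ENNReal.mul_ne_top ENNReal.ofReal_ne_top (ENNReal.mul_ne_top hfin hC_ne)) hfinal
  have hBC : ∀ ε : ℝ, 0 < ε → ∀ᵐ ω ∂μ, ∀ᶠ j in atTop,
      ∀ k, 1 ≤ k → k ≤ m (j+1) - 1 → |S k ω| < ε * 2 ^ j := by
    intro ε hε
    filter_upwards [ae_eventually_notMem (key ε hε)] with ω hω
    filter_upwards [hω] with j hj
    intro k hk1 hk2
    by_contra hcon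
    push_neg at hcon
    exact hj ⟨k, hk1, hk2, hcon⟩
  have hall : ∀ᵐ ω ∂μ, ∀ q : ℕ, ∀ᶠ j in atTop,
      ∀ k, 1 ≤ k → k ≤ m (j+1) - 1 → |S k ω| < (1 / (q + 1 : ℝ)) * 2 ^ j :=
    ae_all_iff.2 fun q => hBC _ (by positivity)
  filter_upwards [hall] with ω hω
  rw [Metric.tendsto_atTop]
  intro ε hε
  obtain ⟨q, hq⟩ := exists_nat_one_div_lt hε
  obtain ⟨J, hJ⟩ := (hω q).exists_forall_of_atTop
  refine ⟨max (m J) 1, fun n hn => ?_⟩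
  have hn1 : 1 ≤ n := le_trans (le_max_right _ _) hn
  have hmJn : m J ≤ n := le_trans (le_max_left _ _) hn
  obtain ⟨B, hB⟩ := (tendsto_atTop.1 hm_top (n + 1)).exists_forall_of_atTop
  have hB' : ∀ j, B ≤ j → n < m j := fun j hj => by have := hB j hj; omega
  have hJB : J ≤ B := by
    by_contra h
    push_neg at h
    exact absurd (le_trans (hm_mono h.le) hmJn) (by have := hB' B le_rfl; omega)
  set j := Nat.findGreatest (fun j => m j ≤ n) B with hj_def
  have hjP : m j ≤ n := Nat.findGreatest_spec (P := fun j => m j ≤ n) hJB hmJn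
  have hJj : J ≤ j := Nat.le_findGreatest (P := fun j => m j ≤ n) hJB hmJn
  have hj1 : n < m (j + 1) := by
    rcases Nat.lt_or_ge (j + 1) B with h | h
    · by_contra hcon
      push_neg at hcon
      exact Nat.findGreatest_is_greatest (Nat.lt_succ_self j) h.le hcon
    · exact lt_of_lt_of_le (hB' B le_rfl) (hm_mono h)
  have hbn : (2:ℝ) ^ j < b n := lt_of_lt_of_le (hm2 j) (hb_mono' (m j) n (hm1 j) hjP)
  have hkn : n ≤ m (j + 1) - 1 := by omega
  have hSn : |S n ω| < (1 / (q + 1 : ℝ)) * 2 ^ j := hJ j hJj n hn1 hkn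
  have hbn_pos : 0 < b n := hb_pos n hn1
  rw [Real.dist_eq, sub_zero, abs_div, abs_of_pos hbn_pos]
  calc |S n ω| / b n < (1 / (q + 1 : ℝ)) := by
        rw [div_lt_iff₀ hbn_pos]
        calc |S n ω| < (1 / (q + 1 : ℝ)) * 2 ^ j := hSn
          _ ≤ (1 / (q + 1 : ℝ)) * b n := by
            apply mul_le_mul_of_nonneg_left hbn.le (by positivity)
    _ < ε := hq
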